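/- Let s ∈ (0,1) and α ∈ (0, 1+s). The principal value P.V. ∫_ℝ (1 − |t|^α)/|1 − t|^{2+s} dt, understood as the limit as ε → 0⁺ of the integral over ℝ \ (1−ε, 1+ε), equals lim_{ε→0⁺} ∫_0^{1−ε} (1 − t^α)(1 − t^{s−α}) [ (1−t)^{-(2+s)} + (1+t)^{-(2+s)} ] dt. -/

import Mathlib

open MeasureTheory intervalIntegral Filter Set

/-- image of `Ioo 0 b⁻¹` under inversion -/
lemma pv_inv_image (b : ℝ) (hb : 0 < b) : (fun u : ℝ => u⁻¹) '' Ioo 0 b⁻¹ = Ioi b := by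
  ext x
  constructor
  · rintro ⟨u, ⟨hu0, hub⟩, rfl⟩
    have : b < u⁻¹ := by
      rw [← inv_inv b]
      exact inv_strictAnti₀ hu0 hub
    exact this
  · intro hx
    have hx0 : 0 < x := hb.trans hx
    refine ⟨x⁻¹, ⟨inv_pos.2 hx0, ?_⟩, inv_inv x⟩
    exact inv_strictAnti₀ hb hx

/-- change of variables `u = x⁻¹` on `Ioi b` -/
lemma pv_inv_cov (b : ℝ) (hb : 0 < b) (F : ℝ → ℝ) :
    ∫ x in Ioi b, F x = ∫ u in Ioo 0 b⁻¹, (u ^ 2)⁻¹ * F u⁻¹ := by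
  rw [← pv_inv_image b hb,
    integral_image_eq_integral_abs_deriv_smul measurableSet_Ioo
      (fun u hu => (hasDerivAt_inv (ne_of_gt hu.1)).hasDerivWithinAt)
      (fun u _ v _ h => inv_injective h) F]
  refine setIntegral_congr_fun measurableSet_Ioo (fun u hu => ?_)
  rw [abs_neg, abs_of_pos (inv_pos.2 (pow_pos hu.1 2))]
  rfl

/-- integrability transfer under inversion -/
lemma pv_inv_int (b : ℝ) (hb : 0 < b) (F : ℝ → ℝ)
    (h : IntegrableOn (fun u => (u ^ 2)⁻¹ * F u⁻¹) (Ioo 0 b⁻¹)) :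
    IntegrableOn F (Ioi b) := by
  rw [← pv_inv_image b hb,
    integrableOn_image_iff_integrableOn_abs_deriv_smul measurableSet_Ioo
      (fun u hu => (hasDerivAt_inv (ne_of_gt hu.1)).hasDerivWithinAt)
      (fun u _ v _ h => inv_injective h) F]
  refine h.congr_fun (fun u hu => ?_) measurableSet_Ioo
  rw [abs_neg, abs_of_pos (inv_pos.2 (pow_pos hu.1 2))]
  rfl

lemma pv_rpow_bd {c x lo : ℝ} (hlo : 0 < lo) (h1 : lo ≤ x) (h2 : x ≤ 1) :
    x ^ c ≤ max 1 (lo ^ c) := by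
  rcases le_or_gt 0 c with hc | hc
  · exact le_max_of_le_left (Real.rpow_le_one (hlo.trans_le h1).le h2 hc)
  · exact le_max_of_le_right (Real.rpow_le_rpow_of_nonpos hlo h1 hc.le)

lemma pv_beta {a b : ℝ} (ha : -1 < a) (hb : -1 < b) :
    IntegrableOn (fun t : ℝ => t ^ a * (1 - t) ^ b) (Ioo 0 1) := by
  have hmeas : Measurable (fun t : ℝ => t ^ a * (1 - t) ^ b) := by fun_prop
  have ia : IntegrableOn (fun t : ℝ => t ^ a) (Ioc 0 2⁻¹) :=
    (intervalIntegrable_iff_integrableOn_Ioc_of_le (by norm_num)).1 (intervalIntegrable_rpow' ha)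
  have ib : IntegrableOn (fun t : ℝ => (1 - t) ^ b) (Ioc 2⁻¹ 1) := by
    have h0 : IntervalIntegrable (fun t : ℝ => t ^ b) volume 0 2⁻¹ := intervalIntegrable_rpow' hb
    have h1 := (h0.comp_sub_left 1).symm
    rw [show (1:ℝ) - 0 = 1 by norm_num, show (1:ℝ) - 2⁻¹ = 2⁻¹ by norm_num] at h1
    exact (intervalIntegrable_iff_integrableOn_Ioc_of_le (by norm_num)).1 h1
  have hsub : Ioo (0:ℝ) 1 ⊆ Ioc 0 2⁻¹ ∪ Ioc 2⁻¹ 1 := by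
    rw [Set.Ioc_union_Ioc_eq_Ioc (by norm_num) (by norm_num)]
    exact Ioo_subset_Ioc_self
  refine IntegrableOn.mono_set (IntegrableOn.union ?_ ?_) hsub
  · refine Integrable.mono (ia.const_mul (max 1 ((2:ℝ)⁻¹ ^ b)))
      (hmeas.aestronglyMeasurable.restrict) ?_
    rw [ae_restrict_iff' measurableSet_Ioc]
    refine ae_of_all _ (fun t ht => ?_)
    have ht0 := ht.1
    have ht2 := ht.2
    have hb1 : (1 - t) ^ b ≤ max 1 ((2:ℝ)⁻¹ ^ b) :=
      pv_rpow_bd (by norm_num) (by linarith) (by linarith)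
    have h1 : 0 ≤ t ^ a := Real.rpow_nonneg ht0.le a
    have h2 : 0 ≤ (1 - t) ^ b := Real.rpow_nonneg (by linarith) b
    rw [Real.norm_eq_abs, Real.norm_eq_abs, abs_of_nonneg (mul_nonneg h1 h2)]
    calc t ^ a * (1 - t) ^ b ≤ t ^ a * max 1 ((2:ℝ)⁻¹ ^ b) :=
          mul_le_mul_of_nonneg_left hb1 h1
    _ = max 1 ((2:ℝ)⁻¹ ^ b) * t ^ a := mul_comm _ _
    _ ≤ |max 1 ((2:ℝ)⁻¹ ^ b) * t ^ a| := le_abs_self _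
  · refine Integrable.mono (ib.const_mul (max 1 ((2:ℝ)⁻¹ ^ a)))
      (hmeas.aestronglyMeasurable.restrict) ?_
    rw [ae_restrict_iff' measurableSet_Ioc]
    refine ae_of_all _ (fun t ht => ?_)
    have ht0 := ht.1
    have ht2 := ht.2
    have ha1 : t ^ a ≤ max 1 ((2:ℝ)⁻¹ ^ a) :=
      pv_rpow_bd (by norm_num) (by linarith) (by linarith)
    have h1 : 0 ≤ t ^ a := Real.rpow_nonneg (by linarith) a
    have h2 : 0 ≤ (1 - t) ^ b := Real.rpow_nonneg (by linarith) b
    rw [Real.norm_eq_abs, Real.norm_eq_abs, abs_of_nonneg (mul_nonneg h1 h2)]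
    calc t ^ a * (1 - t) ^ b ≤ max 1 ((2:ℝ)⁻¹ ^ a) * (1 - t) ^ b :=
          mul_le_mul_of_nonneg_right ha1 h2
    _ ≤ |max 1 ((2:ℝ)⁻¹ ^ a) * (1 - t) ^ b| := le_abs_self _

lemma pv_one_sub_rpow_le {α t : ℝ} (hα2 : α ≤ 2) (ht : 0 < t) (ht1 : t ≤ 1) :
    1 - t ^ α ≤ 2 * (1 - t) := by
  have h : t ^ (2:ℝ) ≤ t ^ α := Real.rpow_le_rpow_of_exponent_ge ht ht1 hα2
  have h2 : t ^ (2:ℝ) = t * t := by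
    rw [show (2:ℝ) = ((2:ℕ):ℝ) by norm_num, Real.rpow_natCast]; ring
  have h3 : t * t ≤ t ^ α := h2 ▸ h
  clear h h2
  nlinarith [sq_nonneg (1 - t), h3]

lemma pv_abs_one_sub_rpow {β t : ℝ} (hβ1 : -1 ≤ β) (hβ2 : β ≤ 1) (ht : 0 < t) (ht1 : t ≤ 1) :
    |1 - t ^ β| ≤ (1 + t ^ β) * (1 - t) := by
  rcases le_or_gt 0 β with hβ | hβ
  · have h1 : t ≤ t ^ β := by
      calc t = t ^ (1:ℝ) := (Real.rpow_one t).symm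
      _ ≤ t ^ β := Real.rpow_le_rpow_of_exponent_ge ht ht1 hβ2
    have h2 : t ^ β ≤ 1 := Real.rpow_le_one ht.le ht1 hβ
    have h3 : 0 ≤ t ^ β := Real.rpow_nonneg ht.le β
    rw [abs_of_nonneg (by linarith)]
    nlinarith
  · have h1 : 1 ≤ t ^ β := Real.one_le_rpow_of_pos_of_le_one_of_nonpos ht ht1 hβ.le
    have h2 : t ≤ t ^ (-β) := by
      calc t = t ^ (1:ℝ) := (Real.rpow_one t).symm
      _ ≤ t ^ (-β) := Real.rpow_le_rpow_of_exponent_ge ht ht1 (by linarith)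
    have h3 : t ^ β * t ^ (-β) = 1 := by
      rw [← Real.rpow_add ht]; simp
    rw [abs_of_nonpos (by linarith)]
    nlinarith [mul_le_mul_of_nonneg_left h2 (by positivity : (0:ℝ) ≤ t ^ β)]

lemma pv_tendsto_prim {φ : ℝ → ℝ} (hint : IntegrableOn φ (Icc 0 1)) :
    Tendsto (fun ε : ℝ => ∫ t in Ioo 0 (1 - ε), φ t) (nhdsWithin 0 (Ioi 0))
      (nhds (∫ t in Ioo 0 1, φ t)) := by
  have hint' : IntegrableOn φ (uIcc 0 1) := by rwa [uIcc_of_le (by norm_num)]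
  have hcont : ContinuousOn (fun x => ∫ t in (0:ℝ)..x, φ t) (Icc 0 1) := by
    have h := intervalIntegral.continuousOn_primitive_interval hint'
    rwa [uIcc_of_le (by norm_num)] at h
  have h1 : Tendsto (fun x => ∫ t in (0:ℝ)..x, φ t) (nhdsWithin 1 (Icc 0 1))
      (nhds (∫ t in (0:ℝ)..1, φ t)) := hcont 1 (by norm_num)
  have h2 : Tendsto (fun ε : ℝ => 1 - ε) (nhdsWithin 0 (Ioi 0)) (nhdsWithin 1 (Icc 0 1)) := by
    rw [tendsto_nhdsWithin_iff]
    constructor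
    · have h : Tendsto (fun ε : ℝ => 1 - ε) (nhds 0) (nhds 1) := by
        have hc : Continuous (fun ε : ℝ => 1 - ε) := continuous_const.sub continuous_id
        have := hc.tendsto (0:ℝ)
        simpa using this
      exact h.mono_left nhdsWithin_le_nhds
    · filter_upwards [Ioo_mem_nhdsGT_of_mem (show (0:ℝ) ∈ Ico (0:ℝ) 1 by simp)] with ε hε
      exact ⟨by linarith [hε.2], by linarith [hε.1]⟩
  have h3 := h1.comp h2
  have key : ∀ x : ℝ, 0 ≤ x → (∫ t in (0:ℝ)..x, φ t) = ∫ t in Ioo 0 x, φ t := by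
    intro x hx
    rw [intervalIntegral.integral_of_le hx, integral_Ioc_eq_integral_Ioo]
  rw [key 1 (by norm_num)] at h3
  apply h3.congr'
  filter_upwards [Ioo_mem_nhdsGT_of_mem (show (0:ℝ) ∈ Ico (0:ℝ) 1 by simp)] with ε hε
  exact key (1 - ε) (by linarith [hε.2])

lemma pv_rpow_tendsto_zero {p : ℝ} (hp : 0 < p) (C : ℝ) :
    Tendsto (fun ε : ℝ => C * ε ^ p) (nhdsWithin 0 (Ioi 0)) (nhds 0) := by
  have h : Tendsto (fun ε : ℝ => ε ^ p) (nhds 0) (nhds ((0:ℝ) ^ p)) :=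
    (Real.continuousAt_rpow_const 0 p (Or.inr hp.le)).tendsto
  rw [Real.zero_rpow (ne_of_gt hp)] at h
  have h2 := (h.const_mul C).mono_left (nhdsWithin_le_nhds (s := Ioi (0:ℝ)))
  simpa using h2

-- algebra for the inversion substitution, (1+t)-kernel
lemma pv_alg_G (s α : ℝ) {u : ℝ} (hu0 : 0 < u) :
    (u ^ 2)⁻¹ * ((1 - (u⁻¹) ^ α) * (1 + u⁻¹) ^ (-(2 + s))) =
      (u ^ s - u ^ (s - α)) * (1 + u) ^ (-(2 + s)) := by
  have hu0' := hu0.le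
  have e1 : (u⁻¹) ^ α = (u ^ α)⁻¹ := Real.inv_rpow hu0' α
  have e2 : (1 + u⁻¹) = (1 + u) / u := by field_simp; ring
  have e3 : ((1 + u) / u) ^ (-(2 + s)) = (1 + u) ^ (-(2 + s)) / u ^ (-(2 + s)) :=
    Real.div_rpow (by linarith) hu0' _
  have e4 : u ^ (-(2 + s)) = (u ^ (2 + s))⁻¹ := Real.rpow_neg hu0' _
  have e5 : u ^ (2 + s) = u ^ 2 * u ^ s := by
    rw [Real.rpow_add hu0, show ((2:ℝ)) = ((2:ℕ):ℝ) by norm_num, Real.rpow_natCast]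
  have e6 : u ^ (s - α) = u ^ s / u ^ α := Real.rpow_sub hu0 s α
  have hα : (0:ℝ) < u ^ α := Real.rpow_pos_of_pos hu0 α
  have hs' : (0:ℝ) < u ^ s := Real.rpow_pos_of_pos hu0 s
  rw [e1, e2, e3, e4, e5, e6]
  field_simp

-- algebra for the inversion substitution, (1-t)-kernel (with absolute values)
lemma pv_alg_g (s α : ℝ) {u : ℝ} (hu0 : 0 < u) (hu1 : u < 1) :
    (u ^ 2)⁻¹ * ((1 - |u⁻¹| ^ α) / |1 - u⁻¹| ^ (2 + s)) =
      (u ^ s - u ^ (s - α)) * (1 - u) ^ (-(2 + s)) := by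
  have hu0' := hu0.le
  have hinv1 : 1 < u⁻¹ := by
    rw [lt_inv_comm₀ one_pos hu0]
    simpa using hu1
  have ea : |u⁻¹| = u⁻¹ := abs_of_pos (inv_pos.2 hu0)
  have eb : |1 - u⁻¹| = (1 - u) / u := by
    rw [abs_of_nonpos (by linarith), neg_sub]
    field_simp
  have e1 : (u⁻¹) ^ α = (u ^ α)⁻¹ := Real.inv_rpow hu0' α
  have e3 : ((1 - u) / u) ^ (2 + s) = (1 - u) ^ (2 + s) / u ^ (2 + s) :=
    Real.div_rpow (by linarith) hu0' _
  have e4 : (1 - u) ^ (-(2 + s)) = ((1 - u) ^ (2 + s))⁻¹ := Real.rpow_neg (by linarith) _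
  have e5 : u ^ (2 + s) = u ^ 2 * u ^ s := by
    rw [Real.rpow_add hu0, show ((2:ℝ)) = ((2:ℕ):ℝ) by norm_num, Real.rpow_natCast]
  have e6 : u ^ (s - α) = u ^ s / u ^ α := Real.rpow_sub hu0 s α
  have hα : (0:ℝ) < u ^ α := Real.rpow_pos_of_pos hu0 α
  have hs' : (0:ℝ) < u ^ s := Real.rpow_pos_of_pos hu0 s
  have hk : (0:ℝ) < (1 - u) ^ (2 + s) := Real.rpow_pos_of_pos (by linarith) _
  rw [ea, eb, e1, e3, e4, e5, e6]
  field_simp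

/-- domination helper -/
lemma pv_int_of_bound {F D : ℝ → ℝ} {S : Set ℝ} (hS : MeasurableSet S)
    (hF : Measurable F) (hD : IntegrableOn D S)
    (hbd : ∀ t ∈ S, |F t| ≤ D t) : IntegrableOn F S := by
  refine Integrable.mono hD hF.aestronglyMeasurable.restrict ?_
  rw [ae_restrict_iff' hS]
  refine ae_of_all _ (fun t ht => ?_)
  rw [Real.norm_eq_abs, Real.norm_eq_abs]
  exact (hbd t ht).trans (le_abs_self _)

set_option maxHeartbeats 1000000 in
theorem pv_integral_identity (s α : ℝ) (hs : s ∈ Set.Ioo (0:ℝ) 1)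
    (hα : α ∈ Set.Ioo (0:ℝ) (1 + s)) :
    ∃ L : ℝ,
      Tendsto (fun ε : ℝ =>
          ∫ t in (Set.Ioo (1 - ε) (1 + ε))ᶜ, (1 - |t| ^ α) / |1 - t| ^ (2 + s))
        (nhdsWithin 0 (Set.Ioi 0)) (nhds L) ∧
      Tendsto (fun ε : ℝ =>
          ∫ t in (0:ℝ)..(1 - ε), (1 - t ^ α) * (1 - t ^ (s - α)) *
            ((1 - t) ^ (-(2 + s)) + (1 + t) ^ (-(2 + s))))
        (nhdsWithin 0 (Set.Ioi 0)) (nhds L) := by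
  obtain ⟨hs0, hs1⟩ := hs
  obtain ⟨hα0, hα1⟩ := hα
  have hα2 : α ≤ 2 := by linarith
  have hβ1 : (-1:ℝ) ≤ s - α := by linarith
  have hβ2 : s - α ≤ 1 := by linarith
  have hβ1' : (-1:ℝ) < s - α := by linarith
  have hcpos : (0:ℝ) < 2 + s := by linarith
  have hcneg : -(2 + s) ≤ 0 := by linarith
  set g : ℝ → ℝ := fun t => (1 - |t| ^ α) / |1 - t| ^ (2 + s) with hg_def
  set f₀ : ℝ → ℝ := fun t => (1 - t ^ α) * (1 - t ^ (s - α)) *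
      ((1 - t) ^ (-(2 + s)) + (1 + t) ^ (-(2 + s))) with hf₀_def
  set φ₁ : ℝ → ℝ := fun t => (1 - t ^ α) * (1 - t ^ (s - α)) * (1 - t) ^ (-(2 + s)) with hφ₁_def
  set φ₂ : ℝ → ℝ := fun t => (1 - t ^ α) * (1 - t ^ (s - α)) * (1 + t) ^ (-(2 + s)) with hφ₂_def
  set G : ℝ → ℝ := fun t => (1 - t ^ α) * (1 + t) ^ (-(2 + s)) with hG_def
  set q : ℝ → ℝ := fun t => (t ^ s - t ^ (s - α)) * (1 - t) ^ (-(2 + s)) with hq_def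
  set p : ℝ → ℝ := fun t => (t ^ s - t ^ (s - α)) * (1 + t) ^ (-(2 + s)) with hp_def
  -- measurability
  have hmg : Measurable g := by rw [hg_def]; fun_prop
  have hmφ₁ : Measurable φ₁ := by rw [hφ₁_def]; fun_prop
  have hmφ₂ : Measurable φ₂ := by rw [hφ₂_def]; fun_prop
  have hmG : Measurable G := by rw [hG_def]; fun_prop
  have hmq : Measurable q := by rw [hq_def]; fun_prop
  have hmp : Measurable p := by rw [hp_def]; fun_prop
  -- basic integrable building blocks
  have hrpow_int : IntegrableOn (fun u : ℝ => u ^ (s - α)) (Ioo 0 1) :=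
    ((intervalIntegrable_iff_integrableOn_Ioc_of_le (by norm_num)).1
      (intervalIntegrable_rpow' hβ1')).mono_set Ioo_subset_Ioc_self
  have hone_sub_int : IntegrableOn (fun t : ℝ => (1 - t) ^ (-s)) (Ioo 0 1) := by
    have h := pv_beta (a := 0) (b := -s) (by norm_num) (by linarith)
    have he : (fun t : ℝ => t ^ (0:ℝ) * (1 - t) ^ (-s)) = fun t : ℝ => (1 - t) ^ (-s) :=
      funext fun t => by rw [Real.rpow_zero, one_mul]
    rwa [he] at h
  -- the dominating function for φ₁ and φ₂
  set D : ℝ → ℝ := fun t => 2 * (1 - t) ^ (-s) + 2 * (t ^ (s - α) * (1 - t) ^ (-s)) with hD_def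
  have hD_int : IntegrableOn D (Ioo 0 1) := by
    rw [hD_def]
    exact (hone_sub_int.const_mul 2).add ((pv_beta hβ1' (by linarith)).const_mul 2)
  have hφ₁bd : ∀ t ∈ Ioo (0:ℝ) 1, |φ₁ t| ≤ D t := by
    rintro t ⟨ht0, ht1⟩
    have h1t : (0:ℝ) < 1 - t := by linarith
    have hαle : t ^ α ≤ 1 := Real.rpow_le_one ht0.le ht1.le hα0.le
    have hα_nn : 0 ≤ 1 - t ^ α := by linarith
    have hX : (0:ℝ) ≤ (1 - t) ^ (-(2 + s)) := Real.rpow_nonneg h1t.le _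
    have hβnn : (0:ℝ) ≤ t ^ (s - α) := Real.rpow_nonneg ht0.le _
    have b1 := pv_one_sub_rpow_le hα2 ht0 ht1.le
    have b2 := pv_abs_one_sub_rpow hβ1 hβ2 ht0 ht1.le
    have hpw : (1 - t) * ((1 - t) * (1 - t) ^ (-(2 + s))) = (1 - t) ^ (-s) := by
      have e : (1 - t) ^ (-s) = (1 - t) ^ (1:ℝ) * ((1 - t) ^ (1:ℝ) * (1 - t) ^ (-(2 + s))) := by
        rw [← Real.rpow_add h1t, ← Real.rpow_add h1t]
        congr 1
        ring
      rw [e, Real.rpow_one]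
    have habs : |φ₁ t| = (1 - t ^ α) * |1 - t ^ (s - α)| * (1 - t) ^ (-(2 + s)) := by
      rw [hφ₁_def]
      simp only []
      rw [abs_mul, abs_mul, abs_of_nonneg hα_nn, abs_of_nonneg hX]
    calc |φ₁ t| = (1 - t ^ α) * |1 - t ^ (s - α)| * (1 - t) ^ (-(2 + s)) := habs
    _ ≤ (2 * (1 - t)) * ((1 + t ^ (s - α)) * (1 - t)) * (1 - t) ^ (-(2 + s)) := by
        refine mul_le_mul_of_nonneg_right ?_ hX
        exact mul_le_mul b1 b2 (abs_nonneg _) (by linarith)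
    _ = (2 + 2 * t ^ (s - α)) * ((1 - t) * ((1 - t) * (1 - t) ^ (-(2 + s)))) := by ring
    _ = (2 + 2 * t ^ (s - α)) * (1 - t) ^ (-s) := by rw [hpw]
    _ = D t := by rw [hD_def]; ring
  have hφ₂bd : ∀ t ∈ Ioo (0:ℝ) 1, |φ₂ t| ≤ D t := by
    rintro t ht
    obtain ⟨ht0, ht1⟩ := ht
    have h1t : (0:ℝ) < 1 - t := by linarith
    have hker : (1 + t) ^ (-(2 + s)) ≤ (1 - t) ^ (-(2 + s)) :=
      Real.rpow_le_rpow_of_nonpos h1t (by linarith) hcneg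
    have hker_nn : (0:ℝ) ≤ (1 + t) ^ (-(2 + s)) := Real.rpow_nonneg (by linarith) _
    have h2 : |φ₂ t| ≤ |φ₁ t| := by
      rw [hφ₂_def, hφ₁_def]
      simp only []
      rw [abs_mul, abs_mul, abs_mul, abs_mul,
        abs_of_nonneg hker_nn, abs_of_nonneg (Real.rpow_nonneg h1t.le (-(2 + s)))]
      exact mul_le_mul_of_nonneg_left hker (mul_nonneg (abs_nonneg _) (abs_nonneg _))
    exact h2.trans (hφ₁bd t ⟨ht0, ht1⟩)
  have hφ₁Ioo : IntegrableOn φ₁ (Ioo 0 1) :=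
    pv_int_of_bound measurableSet_Ioo hmφ₁ hD_int hφ₁bd
  have hφ₂Ioo : IntegrableOn φ₂ (Ioo 0 1) :=
    pv_int_of_bound measurableSet_Ioo hmφ₂ hD_int hφ₂bd
  have hφ₁Icc : IntegrableOn φ₁ (Icc 0 1) := by
    rw [integrableOn_Icc_iff_integrableOn_Ioo]; exact hφ₁Ioo
  -- p is integrable on (0,1)
  have hp_int : IntegrableOn p (Ioo 0 1) := by
    refine pv_int_of_bound measurableSet_Ioo hmp
      (((integrableOn_const_iff (C := (1:ℝ))).2 (Or.inr measure_Ioo_lt_top)).add hrpow_int) ?_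
    rintro t ⟨ht0, ht1⟩
    have hker : (1 + t) ^ (-(2 + s)) ≤ 1 :=
      Real.rpow_le_one_of_one_le_of_nonpos (by linarith) hcneg
    have hker_nn : (0:ℝ) ≤ (1 + t) ^ (-(2 + s)) := Real.rpow_nonneg (by linarith) _
    have hsle : t ^ s ≤ 1 := Real.rpow_le_one ht0.le ht1.le hs0.le
    have hsnn : (0:ℝ) ≤ t ^ s := Real.rpow_nonneg ht0.le _
    have hβnn : (0:ℝ) ≤ t ^ (s - α) := Real.rpow_nonneg ht0.le _
    rw [hp_def]
    simp only []
    rw [abs_mul, abs_of_nonneg hker_nn]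
    calc |t ^ s - t ^ (s - α)| * (1 + t) ^ (-(2 + s))
        ≤ (t ^ s + t ^ (s - α)) * 1 := by
          refine mul_le_mul ?_ hker hker_nn (by positivity)
          refine (abs_sub _ _).trans ?_
          rw [abs_of_nonneg hsnn, abs_of_nonneg hβnn]
    _ ≤ 1 + t ^ (s - α) := by nlinarith
  -- G is integrable on (0,∞)
  have hGIoc : IntegrableOn G (Ioc 0 1) := by
    refine pv_int_of_bound measurableSet_Ioc hmG
      ((integrableOn_const_iff (C := (1:ℝ))).2 (Or.inr measure_Ioc_lt_top)) ?_
    rintro t ⟨ht0, ht1⟩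
    have hker : (1 + t) ^ (-(2 + s)) ≤ 1 :=
      Real.rpow_le_one_of_one_le_of_nonpos (by linarith) hcneg
    have hker_nn : (0:ℝ) ≤ (1 + t) ^ (-(2 + s)) := Real.rpow_nonneg (by linarith) _
    have hαle : t ^ α ≤ 1 := Real.rpow_le_one ht0.le ht1 hα0.le
    have hαnn : (0:ℝ) ≤ t ^ α := Real.rpow_nonneg ht0.le _
    rw [hG_def]
    simp only []
    rw [abs_mul, abs_of_nonneg hker_nn, abs_of_nonneg (by linarith : (0:ℝ) ≤ 1 - t ^ α)]
    nlinarith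
  have hGIoi1 : IntegrableOn G (Ioi 1) := by
    refine pv_inv_int 1 one_pos G ?_
    rw [inv_one]
    refine hp_int.congr_fun (fun u hu => ?_) measurableSet_Ioo
    exact (pv_alg_G s α hu.1).symm
  have hGIoi : IntegrableOn G (Ioi 0) := by
    rw [← Ioc_union_Ioi_eq_Ioi (zero_le_one)]
    exact hGIoc.union hGIoi1
  -- reflection for the negative axis
  have hrefl : ∀ x : ℝ, 0 ≤ x → g (-x) = G x := by
    intro x hx
    rw [hg_def, hG_def]
    simp only []
    rw [abs_neg, abs_of_nonneg hx, show (1:ℝ) - -x = 1 + x by ring,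
      abs_of_nonneg (by linarith : (0:ℝ) ≤ 1 + x), Real.rpow_neg (by linarith), div_eq_mul_inv]
  have hgIic : IntegrableOn g (Iic 0) := by
    have him : (fun x : ℝ => -x) '' Ici (0:ℝ) = Iic 0 := by
      ext x
      constructor
      · rintro ⟨y, hy, rfl⟩
        simp only [mem_Iic]
        simp only [mem_Ici] at hy
        linarith
      · intro hx
        simp only [mem_Iic] at hx
        exact ⟨-x, by simp only [mem_Ici]; linarith, by ring⟩
    rw [← him,
      integrableOn_image_iff_integrableOn_abs_deriv_smul measurableSet_Ici
        (fun x _ => (hasDerivAt_neg x).hasDerivWithinAt) (neg_injective.injOn) g]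
    have hGIci : IntegrableOn G (Ici 0) := by
      rw [integrableOn_Ici_iff_integrableOn_Ioi]; exact hGIoi
    refine hGIci.congr_fun (fun x hx => ?_) measurableSet_Ici
    rw [abs_neg, abs_one, one_smul]
    exact (hrefl x hx).symm
  -- value of the negative-axis integral
  have hA₀ : (∫ t in Iic (0:ℝ), g t) = ∫ t in Ioo (0:ℝ) 1, φ₂ t := by
    have e := integral_comp_neg_Iic (0:ℝ) (fun y => g (-y))
    simp only [neg_neg, neg_zero] at e
    have hGIoo : IntegrableOn G (Ioo 0 1) := hGIoc.mono_set Ioo_subset_Ioc_self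
    calc (∫ t in Iic (0:ℝ), g t) = ∫ x in Ioi (0:ℝ), g (-x) := e
    _ = ∫ x in Ioi (0:ℝ), G x :=
        setIntegral_congr_fun measurableSet_Ioi (fun x hx => hrefl x (le_of_lt hx))
    _ = (∫ x in Ioc (0:ℝ) 1, G x) + ∫ x in Ioi (1:ℝ), G x := by
        rw [← Ioc_union_Ioi_eq_Ioi (zero_le_one),
          setIntegral_union (Ioc_disjoint_Ioi le_rfl) measurableSet_Ioi hGIoc hGIoi1]
    _ = (∫ x in Ioo (0:ℝ) 1, G x) + ∫ x in Ioo (0:ℝ) 1, p x := by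
        rw [integral_Ioc_eq_integral_Ioo, pv_inv_cov 1 one_pos G, inv_one]
        congr 1
        exact setIntegral_congr_fun measurableSet_Ioo (fun u hu => pv_alg_G s α hu.1)
    _ = ∫ x in Ioo (0:ℝ) 1, (G x + p x) := (integral_add hGIoo hp_int).symm
    _ = ∫ t in Ioo (0:ℝ) 1, φ₂ t := by
        refine setIntegral_congr_fun measurableSet_Ioo (fun t ht => ?_)
        have hts : t ^ (s - α) * t ^ α = t ^ s := by
          rw [← Real.rpow_add ht.1]; ring_nf
        rw [hG_def, hp_def, hφ₂_def]
        simp only []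
        linear_combination (-((1 + t) ^ (-(2 + s)))) * hts
  -- main splitting identity
  have main_eq : ∀ ε : ℝ, ε ∈ Ioo (0:ℝ) 2⁻¹ →
      (∫ t in (Ioo (1 - ε) (1 + ε))ᶜ, g t) =
        (∫ t in Ioo (0:ℝ) 1, φ₂ t) + (∫ t in Ioo (0:ℝ) (1 - ε), φ₁ t)
          + (∫ t in Ico (1 - ε) (1 + ε)⁻¹, q t) := by
    rintro ε ⟨hε0, hεh⟩
    have h1e : (0:ℝ) < 1 + ε := by linarith
    have h1me : (0:ℝ) < 1 - ε := by linarith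
    have hb0 : (0:ℝ) < (1 + ε)⁻¹ := inv_pos.2 h1e
    have hib : 1 - ε ≤ (1 + ε)⁻¹ := by
      rw [inv_eq_one_div, le_div_iff₀ h1e]; nlinarith
    have hbl1 : (1 + ε)⁻¹ < 1 := by
      rw [inv_eq_one_div, div_lt_one h1e]; linarith
    -- g integrable on middle piece
    have hgmid : IntegrableOn g (Ioc 0 (1 - ε)) := by
      refine pv_int_of_bound measurableSet_Ioc hmg
        ((integrableOn_const_iff (C := 1 / ε ^ (2 + s))).2 (Or.inr measure_Ioc_lt_top)) ?_
      rintro t ⟨ht0, ht1⟩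
      have h1t : (0:ℝ) < 1 - t := by linarith
      have hden : ε ^ (2 + s) ≤ (1 - t) ^ (2 + s) :=
        Real.rpow_le_rpow hε0.le (by linarith) hcpos.le
      have hdenpos : (0:ℝ) < ε ^ (2 + s) := Real.rpow_pos_of_pos hε0 _
      have hnum : |1 - t ^ α| ≤ 1 := by
        have h1 : t ^ α ≤ 1 := Real.rpow_le_one ht0.le (by linarith) hα0.le
        have h2 : (0:ℝ) ≤ t ^ α := Real.rpow_nonneg ht0.le _
        rw [abs_of_nonneg (by linarith)]; linarith
      rw [hg_def]
      simp only []
      rw [abs_of_pos ht0, abs_of_pos h1t, abs_div,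
        abs_of_nonneg (Real.rpow_nonneg h1t.le _)]
      exact div_le_div₀ (by norm_num) hnum hdenpos hden
    -- q integrable on Ioo 0 (1+ε)⁻¹
    have hm0 : (0:ℝ) < 1 - (1 + ε)⁻¹ := by linarith
    have hq_int_b : IntegrableOn q (Ioo 0 (1 + ε)⁻¹) := by
      set Cb : ℝ := (1 - (1 + ε)⁻¹) ^ (-(2 + s)) with hCb_def
      have hCb_nn : 0 ≤ Cb := Real.rpow_nonneg hm0.le _
      refine pv_int_of_bound measurableSet_Ioo hmq
        ((((integrableOn_const_iff (C := Cb)).2 (Or.inr measure_Ioo_lt_top)).add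
          ((hrpow_int.mono_set (Ioo_subset_Ioo_right hbl1.le)).const_mul Cb))) ?_
      rintro t ⟨ht0, ht1⟩
      have ht1' : t < 1 := ht1.trans hbl1
      have hker : (1 - t) ^ (-(2 + s)) ≤ Cb := by
        rw [hCb_def]
        exact Real.rpow_le_rpow_of_nonpos hm0 (by linarith) hcneg
      have hker_nn : (0:ℝ) ≤ (1 - t) ^ (-(2 + s)) := Real.rpow_nonneg (by linarith) _
      have hsle : t ^ s ≤ 1 := Real.rpow_le_one ht0.le ht1'.le hs0.le
      have hsnn : (0:ℝ) ≤ t ^ s := Real.rpow_nonneg ht0.le _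
      have hβnn : (0:ℝ) ≤ t ^ (s - α) := Real.rpow_nonneg ht0.le _
      rw [hq_def]
      simp only []
      rw [abs_mul, abs_of_nonneg hker_nn]
      calc |t ^ s - t ^ (s - α)| * (1 - t) ^ (-(2 + s))
          ≤ (1 + t ^ (s - α)) * Cb := by
            refine mul_le_mul ?_ hker hker_nn (by positivity)
            refine (abs_sub _ _).trans ?_
            rw [abs_of_nonneg hsnn, abs_of_nonneg hβnn]
            linarith
      _ = Cb + Cb * t ^ (s - α) := by ring
    -- g integrable on right tail
    have hgIci : IntegrableOn g (Ici (1 + ε)) := by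
      rw [integrableOn_Ici_iff_integrableOn_Ioi]
      refine pv_inv_int (1 + ε) h1e g ?_
      refine hq_int_b.congr_fun (fun u hu => ?_) measurableSet_Ioo
      exact (pv_alg_g s α hu.1 (hu.2.trans hbl1)).symm
    have hgIic' : IntegrableOn g (Iic (1 - ε)) := by
      rw [← Iic_union_Ioc_eq_Iic (le_of_lt h1me)]
      exact hgIic.union hgmid
    -- splitting of the complement
    have hcompl : (Ioo (1 - ε) (1 + ε))ᶜ = Iic (1 - ε) ∪ Ici (1 + ε) := by
      ext x
      simp only [mem_compl_iff, mem_Ioo, mem_union, mem_Iic, mem_Ici, not_and_or, not_lt]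
    have hdisj : Disjoint (Iic (1 - ε)) (Ici (1 + ε)) := by
      refine disjoint_left.2 fun x hx hx' => ?_
      simp only [mem_Iic] at hx
      simp only [mem_Ici] at hx'
      linarith
    have step2 : (∫ t in (Ioo (1 - ε) (1 + ε))ᶜ, g t) =
        (∫ t in Iic (1 - ε), g t) + ∫ t in Ici (1 + ε), g t := by
      rw [hcompl, setIntegral_union hdisj measurableSet_Ici hgIic' hgIci]
    have step3 : (∫ t in Iic (1 - ε), g t) =
        (∫ t in Iic (0:ℝ), g t) + ∫ t in Ioc (0:ℝ) (1 - ε), g t := by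
      rw [← Iic_union_Ioc_eq_Iic (le_of_lt h1me),
        setIntegral_union (Iic_disjoint_Ioc le_rfl) measurableSet_Ioc hgIic hgmid]
    have step6 : (∫ t in Ici (1 + ε), g t) = ∫ u in Ioo (0:ℝ) (1 + ε)⁻¹, q u := by
      rw [integral_Ici_eq_integral_Ioi, pv_inv_cov (1 + ε) h1e g]
      exact setIntegral_congr_fun measurableSet_Ioo
        (fun u hu => pv_alg_g s α hu.1 (hu.2.trans hbl1))
    have hdisj2 : Disjoint (Ioo (0:ℝ) (1 - ε)) (Ico (1 - ε) (1 + ε)⁻¹) := by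
      refine disjoint_left.2 fun x hx hx' => ?_
      exact absurd hx'.1 (not_le.2 hx.2)
    have step7 : (∫ u in Ioo (0:ℝ) (1 + ε)⁻¹, q u) =
        (∫ u in Ioo (0:ℝ) (1 - ε), q u) + ∫ u in Ico (1 - ε) (1 + ε)⁻¹, q u := by
      rw [← Ioo_union_Ico_eq_Ioo h1me hib,
        setIntegral_union hdisj2 measurableSet_Ico
          (hq_int_b.mono_set (Ioo_subset_Ioo_right hib))
          (hq_int_b.mono_set (fun x hx => ⟨by
            simp only [mem_Ico] at hx
            linarith [hx.1], by
            simp only [mem_Ico] at hx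
            exact hx.2⟩))]
    have step5 : (∫ t in Ioc (0:ℝ) (1 - ε), g t) + (∫ u in Ioo (0:ℝ) (1 - ε), q u) =
        ∫ t in Ioo (0:ℝ) (1 - ε), φ₁ t := by
      rw [integral_Ioc_eq_integral_Ioo,
        ← integral_add (hgmid.mono_set Ioo_subset_Ioc_self)
          (hq_int_b.mono_set (Ioo_subset_Ioo_right hib))]
      refine setIntegral_congr_fun measurableSet_Ioo (fun t ht => ?_)
      obtain ⟨ht0, ht1⟩ := ht
      have ht1' : t < 1 := by linarith
      have h1t : (0:ℝ) < 1 - t := by linarith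
      have hts : t ^ (s - α) * t ^ α = t ^ s := by
        rw [← Real.rpow_add ht0]; ring_nf
      have hgt : g t = (1 - t ^ α) * (1 - t) ^ (-(2 + s)) := by
        rw [hg_def]
        simp only []
        rw [abs_of_pos ht0, abs_of_pos h1t, Real.rpow_neg h1t.le, div_eq_mul_inv]
      rw [hgt, hq_def, hφ₁_def]
      simp only []
      linear_combination (-((1 - t) ^ (-(2 + s)))) * hts
    rw [step2, step3, step6, step7, hA₀, ← step5]
    ring
  -- the remainder term tends to zero
  have hRbd : ∀ᶠ ε in nhdsWithin (0:ℝ) (Ioi 0),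
      ‖∫ t in Ico (1 - ε) (1 + ε)⁻¹, q t‖ ≤ (4 * ε * (ε / 2) ^ (-(2 + s))) * ε ^ 2 := by
    filter_upwards [Ioo_mem_nhdsGT_of_mem
      (show (0:ℝ) ∈ Ico (0:ℝ) 2⁻¹ by constructor <;> norm_num)] with ε hε
    obtain ⟨hε0, hεh⟩ := hε
    have h1e : (0:ℝ) < 1 + ε := by linarith
    have h1me : (0:ℝ) < 1 - ε := by linarith
    have hib : 1 - ε ≤ (1 + ε)⁻¹ := by
      rw [inv_eq_one_div, le_div_iff₀ h1e]; nlinarith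
    have hbl1 : (1 + ε)⁻¹ < 1 := by
      rw [inv_eq_one_div, div_lt_one h1e]; linarith
    have hbhalf : (1 + ε)⁻¹ ≤ 1 - ε / 2 := by
      rw [inv_eq_one_div, div_le_iff₀ h1e]; nlinarith
    have hCnn : (0:ℝ) ≤ 4 * ε * (ε / 2) ^ (-(2 + s)) := by positivity
    have hptwise : ∀ t ∈ Ico (1 - ε) (1 + ε)⁻¹, ‖q t‖ ≤ 4 * ε * (ε / 2) ^ (-(2 + s)) := by
      rintro t ⟨ht1, ht2⟩
      have ht0 : (0:ℝ) < t := by linarith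
      have hthalf : (2:ℝ)⁻¹ ≤ t := by linarith
      have ht1' : t < 1 := ht2.trans hbl1
      have h1t : (0:ℝ) < 1 - t := by linarith
      have hts : t ^ (s - α) * t ^ α = t ^ s := by
        rw [← Real.rpow_add ht0]; ring_nf
      have hβbd : t ^ (s - α) ≤ 2 := by
        refine (pv_rpow_bd (show (0:ℝ) < 2⁻¹ by norm_num) hthalf ht1'.le).trans ?_
        refine max_le one_le_two ?_
        rw [Real.inv_rpow (by norm_num), ← Real.rpow_neg (by norm_num)]
        calc (2:ℝ) ^ (-(s - α)) ≤ (2:ℝ) ^ (1:ℝ) :=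
              Real.rpow_le_rpow_of_exponent_le one_le_two (by linarith)
        _ = 2 := Real.rpow_one 2
      have hαbd : 1 - t ^ α ≤ 2 * ε := by
        have := pv_one_sub_rpow_le hα2 ht0 ht1'.le
        linarith
      have hα_nn : 0 ≤ 1 - t ^ α := by
        have : t ^ α ≤ 1 := Real.rpow_le_one ht0.le ht1'.le hα0.le
        linarith
      have hker : (1 - t) ^ (-(2 + s)) ≤ (ε / 2) ^ (-(2 + s)) := by
        refine Real.rpow_le_rpow_of_nonpos (by positivity) (by linarith) hcneg
      have hker_nn : (0:ℝ) ≤ (1 - t) ^ (-(2 + s)) := Real.rpow_nonneg h1t.le _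
      have hβnn : (0:ℝ) ≤ t ^ (s - α) := Real.rpow_nonneg ht0.le _
      have habs : |t ^ s - t ^ (s - α)| = t ^ (s - α) * (1 - t ^ α) := by
        have e : t ^ s - t ^ (s - α) = t ^ (s - α) * (t ^ α - 1) := by
          rw [mul_sub, hts, mul_one]
        rw [e, abs_mul, abs_of_nonneg hβnn, abs_of_nonpos (by linarith), neg_sub]
      rw [Real.norm_eq_abs, hq_def]
      simp only []
      rw [abs_mul, abs_of_nonneg hker_nn, habs]
      calc t ^ (s - α) * (1 - t ^ α) * (1 - t) ^ (-(2 + s))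
          ≤ (2 * (2 * ε)) * (ε / 2) ^ (-(2 + s)) := by
            refine mul_le_mul ?_ hker hker_nn (by positivity)
            exact mul_le_mul hβbd hαbd hα_nn (by norm_num)
      _ = 4 * ε * (ε / 2) ^ (-(2 + s)) := by ring
    calc ‖∫ t in Ico (1 - ε) (1 + ε)⁻¹, q t‖
        ≤ (4 * ε * (ε / 2) ^ (-(2 + s))) * (volume (Ico (1 - ε) (1 + ε)⁻¹)).toReal :=
          norm_setIntegral_le_of_norm_le_const measure_Ico_lt_top hptwise
    _ ≤ (4 * ε * (ε / 2) ^ (-(2 + s))) * ε ^ 2 := by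
        refine mul_le_mul_of_nonneg_left ?_ hCnn
        rw [Real.volume_Ico, ENNReal.toReal_ofReal (by linarith)]
        have : (1 + ε)⁻¹ ≤ 1 - ε + ε ^ 2 := by
          rw [inv_eq_one_div, div_le_iff₀ h1e]; nlinarith
        linarith
  have hhT : Tendsto (fun ε : ℝ => (4 * ε * (ε / 2) ^ (-(2 + s))) * ε ^ 2)
      (nhdsWithin 0 (Ioi 0)) (nhds 0) := by
    refine Tendsto.congr' ?_ (pv_rpow_tendsto_zero (by linarith : (0:ℝ) < 1 - s)
      (4 * (2:ℝ) ^ (2 + s)))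
    filter_upwards [self_mem_nhdsWithin] with ε hε
    have hε0 : (0:ℝ) < ε := hε
    have e1 : (ε / 2) ^ (-(2 + s)) = ε ^ (-(2 + s)) / 2 ^ (-(2 + s)) :=
      Real.div_rpow hε0.le (by norm_num) _
    have e2 : (2:ℝ) ^ (-(2 + s)) = ((2:ℝ) ^ (2 + s))⁻¹ := Real.rpow_neg (by norm_num) _
    have e3 : ε ^ (-(2 + s)) = (ε ^ (2 + s))⁻¹ := Real.rpow_neg hε0.le _
    have e4 : ε ^ (1 - s) * ε ^ (2 + s) = ε * ε ^ 2 := by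
      rw [← Real.rpow_add hε0, show (1 - s) + (2 + s) = ((3:ℕ):ℝ) by norm_num,
        Real.rpow_natCast]
      ring
    have h2p : ((2:ℝ) ^ (2 + s)) ≠ 0 := (Real.rpow_pos_of_pos two_pos _).ne'
    have hεp : (ε ^ (2 + s)) ≠ 0 := (Real.rpow_pos_of_pos hε0 _).ne'
    rw [e1, e2, e3]
    field_simp
    linear_combination e4
  have hR0 : Tendsto (fun ε : ℝ => ∫ t in Ico (1 - ε) (1 + ε)⁻¹, q t)
      (nhdsWithin 0 (Ioi 0)) (nhds 0) := squeeze_zero_norm' hRbd hhT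
  refine ⟨(∫ t in Ioo (0:ℝ) 1, φ₁ t) + (∫ t in Ioo (0:ℝ) 1, φ₂ t), ?_, ?_⟩
  · -- first limit
    have hT1 : Tendsto (fun ε : ℝ =>
        (∫ t in Ioo (0:ℝ) 1, φ₂ t) + (∫ t in Ioo (0:ℝ) (1 - ε), φ₁ t)
          + (∫ t in Ico (1 - ε) (1 + ε)⁻¹, q t)) (nhdsWithin 0 (Ioi 0))
        (nhds ((∫ t in Ioo (0:ℝ) 1, φ₂ t) + (∫ t in Ioo (0:ℝ) 1, φ₁ t) + 0)) :=
      (tendsto_const_nhds.add (pv_tendsto_prim hφ₁Icc)).add hR0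
    rw [show (∫ t in Ioo (0:ℝ) 1, φ₁ t) + (∫ t in Ioo (0:ℝ) 1, φ₂ t) =
        (∫ t in Ioo (0:ℝ) 1, φ₂ t) + (∫ t in Ioo (0:ℝ) 1, φ₁ t) + 0 by ring]
    refine Tendsto.congr' ?_ hT1
    filter_upwards [Ioo_mem_nhdsGT_of_mem
      (show (0:ℝ) ∈ Ico (0:ℝ) 2⁻¹ by constructor <;> norm_num)] with ε hε
    exact (main_eq ε hε).symm
  · -- second limit
    have hf₀eq : f₀ = fun t => φ₁ t + φ₂ t := by
      funext t
      rw [hf₀_def, hφ₁_def, hφ₂_def]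
      simp only []
      ring
    have hf₀Icc : IntegrableOn f₀ (Icc 0 1) := by
      rw [integrableOn_Icc_iff_integrableOn_Ioo, hf₀eq]
      exact hφ₁Ioo.add hφ₂Ioo
    have hT := pv_tendsto_prim hf₀Icc
    have hval : (∫ t in Ioo (0:ℝ) 1, f₀ t) =
        (∫ t in Ioo (0:ℝ) 1, φ₁ t) + (∫ t in Ioo (0:ℝ) 1, φ₂ t) := by
      rw [hf₀eq]
      exact integral_add hφ₁Ioo hφ₂Ioo
    rw [hval] at hT
    refine Tendsto.congr' ?_ hT
    filter_upwards [Ioo_mem_nhdsGT_of_mem (show (0:ℝ) ∈ Ico (0:ℝ) 1 by simp)] with ε hε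
    rw [intervalIntegral.integral_of_le (by linarith [hε.2] : (0:ℝ) ≤ 1 - ε),
      integral_Ioc_eq_integral_Ioo]
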